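/- Let X be a standardized k-Dirac mixture with k > 1, let γ = E[X³], let s** = γ/2, and let g** = Σ_{i=1}^k 1{μ_i ≤ s**}. Assume μ_1 ≤ s** ≤ μ_k (so that 1 ≤ g** ≤ k−1 and s** ∈ [μ_{g**}, μ_{g**+1}]). Then the approximate standardized folding ratio satisfies Φ**(X) = 4 · Var|X − s**| = 4 (1 − 4 α_{g**}² − 2 α_{g**} (1 − 2 η_{g**}) γ + η_{g**} (1 − η_{g**}) γ²). -/

import Mathlib

open MeasureTheory ProbabilityTheory

lemma integrable_dirac'' {f : ℝ → ℝ} (hf : Measurable f) (a : ℝ) :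
    Integrable f (Measure.dirac a) := by
  refine ⟨hf.aestronglyMeasurable, ?_⟩
  rw [HasFiniteIntegral, lintegral_dirac' a (by fun_prop)]
  exact ENNReal.coe_lt_top

lemma integral_mix (k : ℕ) (ε μ : ℕ → ℝ) (hε : ∀ i ∈ Finset.Icc 1 k, 0 ≤ ε i)
    (f : ℝ → ℝ) (hf : Measurable f) :
    ∫ x, f x ∂(∑ i ∈ Finset.Icc 1 k, ENNReal.ofReal (ε i) • Measure.dirac (μ i)) =
      ∑ i ∈ Finset.Icc 1 k, ε i * f (μ i) := by
  rw [integral_finset_sum_measure (fun i hi =>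
    (integrable_dirac'' hf (μ i)).smul_measure ENNReal.ofReal_ne_top)]
  refine Finset.sum_congr rfl fun i hi => ?_
  rw [integral_smul_measure, integral_dirac f (μ i),
    ENNReal.toReal_ofReal (hε i hi), smul_eq_mul]

/-- For a standardized `k`-Dirac mixture `X` (law `P`), let `γ = E[X³]`,
`s⋆⋆ = γ / 2`, and `g⋆⋆ = Σ_{i=1}^k 1{μᵢ ≤ s⋆⋆}`. Assume `μ₁ ≤ s⋆⋆ ≤ μ_k`. Then the
approximate standardized folding ratio satisfies
`Φ⋆⋆(X) = 4 · Var |X - s⋆⋆|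
        = 4 (1 - 4 α_{g⋆⋆}² - 2 α_{g⋆⋆} (1 - 2 η_{g⋆⋆}) γ + η_{g⋆⋆} (1 - η_{g⋆⋆}) γ²)`. -/
theorem stmt_10 (k : ℕ) (hk : 1 < k) (ε μ : ℕ → ℝ)
    (hε : ∀ i ∈ Finset.Icc 1 k, 0 < ε i)
    (hsum : ∑ i ∈ Finset.Icc 1 k, ε i = 1)
    (hord : ∀ i ∈ Finset.Ico 1 k, μ i < μ (i + 1))
    (P : Measure ℝ)
    (hP : P = ∑ i ∈ Finset.Icc 1 k, ENNReal.ofReal (ε i) • Measure.dirac (μ i))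
    (hmean : ∫ x, x ∂P = 0) (hm2 : ∫ x, x ^ 2 ∂P = 1)
    (γ sstarstar : ℝ) (hγ : γ = ∫ x, x ^ 3 ∂P) (hss : sstarstar = γ / 2)
    (gstarstar : ℕ)
    (hg : gstarstar = ∑ i ∈ Finset.Icc 1 k, if μ i ≤ sstarstar then 1 else 0)
    (hlo : μ 1 ≤ sstarstar) (hhi : sstarstar ≤ μ k)
    (α η : ℝ)
    (hα : α = ∑ i ∈ Finset.Icc 1 gstarstar, ε i * μ i)
    (hη : η = ∑ i ∈ Finset.Icc 1 gstarstar, ε i) :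
    4 * variance (fun x => |x - sstarstar|) P =
      4 * (1 - 4 * α ^ 2 - 2 * α * (1 - 2 * η) * γ + η * (1 - η) * γ ^ 2) := by
  set s := sstarstar with hs
  set g := gstarstar with hgdef
  have hε' : ∀ i ∈ Finset.Icc 1 k, 0 ≤ ε i := fun i hi => (hε i hi).le
  -- monotonicity of μ on Icc 1 k
  have hmono : ∀ i j, 1 ≤ i → i ≤ j → j ≤ k → μ i ≤ μ j := by
    intro i j h1 hij hjk
    induction j, hij using Nat.le_induction with
    | base => exact le_rfl
    | succ n hn ih =>
        have hnk : n < k := Nat.lt_of_succ_le hjk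
        exact le_trans (ih hnk.le) (hord n (Finset.mem_Ico.2 ⟨le_trans h1 hn, hnk⟩)).le
  -- the filtered set
  set S := (Finset.Icc 1 k).filter (fun i => μ i ≤ s) with hS
  have hgcard : g = S.card := by
    rw [hg, hS, Finset.card_filter]
  have h1S : 1 ∈ S := by
    refine Finset.mem_filter.2 ⟨Finset.mem_Icc.2 ⟨le_refl 1, hk.le⟩, hlo⟩
  have hne : S.Nonempty := ⟨1, h1S⟩
  set M := S.max' hne with hM
  have hMS : M ∈ S := S.max'_mem hne
  have hMk : M ≤ k := (Finset.mem_Icc.1 (Finset.mem_filter.1 hMS).1).2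
  have hM1 : 1 ≤ M := (Finset.mem_Icc.1 (Finset.mem_filter.1 hMS).1).1
  have hμM : μ M ≤ s := (Finset.mem_filter.1 hMS).2
  have hSeq : S = Finset.Icc 1 M := by
    apply Finset.Subset.antisymm
    · intro i hi
      exact Finset.mem_Icc.2 ⟨(Finset.mem_Icc.1 (Finset.mem_filter.1 hi).1).1, S.le_max' i hi⟩
    · intro i hi
      obtain ⟨h1i, hiM⟩ := Finset.mem_Icc.1 hi
      refine Finset.mem_filter.2 ⟨Finset.mem_Icc.2 ⟨h1i, le_trans hiM hMk⟩,
        le_trans (hmono i M h1i hiM hMk) hμM⟩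
  have hgM : g = M := by
    rw [hgcard, hSeq, Nat.card_Icc]; omega
  have hgk : g ≤ k := hgM ▸ hMk
  have hg1 : 1 ≤ g := hgM ▸ hM1
  -- membership characterization
  have hmem : ∀ i ∈ Finset.Icc 1 k, (μ i ≤ s ↔ i ≤ g) := by
    intro i hi
    constructor
    · intro h
      have : i ∈ S := Finset.mem_filter.2 ⟨hi, h⟩
      rw [hSeq] at this
      exact hgM ▸ (Finset.mem_Icc.1 this).2
    · intro h
      have : i ∈ S := by
        rw [hSeq]
        exact Finset.mem_Icc.2 ⟨(Finset.mem_Icc.1 hi).1, hgM ▸ h⟩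
      exact (Finset.mem_filter.1 this).2
  -- sum splitting
  have hsplit : ∀ f : ℕ → ℝ, ∑ i ∈ Finset.Icc 1 k, f i =
      ∑ i ∈ Finset.Icc 1 g, f i + ∑ i ∈ Finset.Ioc g k, f i := by
    intro f
    rw [show Finset.Icc 1 k = Finset.Ioc 0 k from Finset.Icc_add_one_left_eq_Ioc 0 k,
      show Finset.Icc 1 g = Finset.Ioc 0 g from Finset.Icc_add_one_left_eq_Ioc 0 g]
    exact (Finset.sum_Ioc_consecutive f (Nat.zero_le g) hgk).symm
  -- integral computation
  have hint : ∀ f : ℝ → ℝ, Measurable f →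
      ∫ x, f x ∂P = ∑ i ∈ Finset.Icc 1 k, ε i * f (μ i) := by
    intro f hf; rw [hP]; exact integral_mix k ε μ hε' f hf
  have hm1' : ∑ i ∈ Finset.Icc 1 k, ε i * μ i = 0 := by
    have h := hint (fun x => x) measurable_id
    rw [hmean] at h; exact h.symm
  have hm2' : ∑ i ∈ Finset.Icc 1 k, ε i * μ i ^ 2 = 1 := by
    have h := hint (fun x => x ^ 2) (by fun_prop)
    rw [hm2] at h; exact h.symm
  have hprob : IsProbabilityMeasure P := by
    constructor
    rw [hP, Measure.finset_sum_apply]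
    simp only [Measure.smul_apply, Measure.dirac_apply_of_mem (Set.mem_univ _), smul_eq_mul,
      mul_one]
    rw [← ENNReal.ofReal_sum_of_nonneg hε', hsum, ENNReal.ofReal_one]
  have hmes : Measurable (fun x : ℝ => |x - s|) := by fun_prop
  have hint2 : Integrable (fun x => |x - s| ^ 2) P := by
    rw [hP]
    exact integrable_finset_sum_measure.2 fun i hi =>
      (integrable_dirac'' (by fun_prop) _).smul_measure ENNReal.ofReal_ne_top
  have hmem2 : MemLp (fun x => |x - s|) 2 P :=
    (memLp_two_iff_integrable_sq hmes.aestronglyMeasurable).2 hint2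
  -- first moment of |X - s|
  have hηB : η + ∑ i ∈ Finset.Ioc g k, ε i = 1 := by
    rw [hη, ← hsplit ε]; exact hsum
  have hαB : α + ∑ i ∈ Finset.Ioc g k, ε i * μ i = 0 := by
    rw [hα, ← hsplit (fun i => ε i * μ i)]; exact hm1'
  have hE1 : ∫ x, |x - s| ∂P = s * (2 * η - 1) - 2 * α := by
    rw [hint _ hmes, hsplit (fun i => ε i * |μ i - s|)]
    have h1 : ∀ i ∈ Finset.Icc 1 g, ε i * |μ i - s| = s * ε i - ε i * μ i := by
      intro i hi
      obtain ⟨h1i, hig⟩ := Finset.mem_Icc.1 hi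
      have hik : i ∈ Finset.Icc 1 k := Finset.mem_Icc.2 ⟨h1i, le_trans hig hgk⟩
      have hμi : μ i ≤ s := (hmem i hik).2 hig
      rw [abs_of_nonpos (by linarith)]; ring
    have h2 : ∀ i ∈ Finset.Ioc g k, ε i * |μ i - s| = ε i * μ i - s * ε i := by
      intro i hi
      obtain ⟨hgi, hik⟩ := Finset.mem_Ioc.1 hi
      have hik' : i ∈ Finset.Icc 1 k := Finset.mem_Icc.2 ⟨le_trans hg1 hgi.le, hik⟩
      have hμi : ¬ μ i ≤ s := fun h => absurd ((hmem i hik').1 h) (Nat.not_le.2 hgi)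
      push_neg at hμi
      rw [abs_of_nonneg (by linarith)]; ring
    rw [Finset.sum_congr rfl h1, Finset.sum_congr rfl h2, Finset.sum_sub_distrib,
      Finset.sum_sub_distrib, ← Finset.mul_sum, ← Finset.mul_sum, ← hη, ← hα]
    have hB : ∑ i ∈ Finset.Ioc g k, ε i * μ i = -α := by linarith
    have hC : ∑ i ∈ Finset.Ioc g k, ε i = 1 - η := by linarith
    rw [hB, hC]; ring
  have hE2 : ∫ x, |x - s| ^ 2 ∂P = 1 + s ^ 2 := by
    rw [hint _ (by fun_prop)]
    have h1 : ∀ i ∈ Finset.Icc 1 k, ε i * |μ i - s| ^ 2 =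
        ε i * μ i ^ 2 - 2 * s * (ε i * μ i) + s ^ 2 * ε i := by
      intro i _; rw [sq_abs]; ring
    rw [Finset.sum_congr rfl h1, Finset.sum_add_distrib, Finset.sum_sub_distrib,
      ← Finset.mul_sum, ← Finset.mul_sum, hm1', hm2', hsum]
    ring
  rw [variance_eq_sub hmem2]
  simp only [Pi.pow_apply]
  rw [hE2, hE1, hss]
  ring
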